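/- Let F be the 4×4 real matrix whose (1,2) entry is (1−u₂)βk₆ + (1−δ)βu₁k₆/μ and whose other entries are 0, and let V be the 4×4 real matrix with rows (k₁,0,0,0), (−θ,k₂,0,0), (−u₃,−u₄,k₃,0), (0,−u₅,−τ,k₄). Then V is invertible, and the characteristic polynomial of F·V⁻¹ is X³·(X − R₀), where R₀ = θβk₆(μ(1−u₂)+(1−δ)u₁)/(k₁k₂μ); in particular, the eigenvalues of F·V⁻¹ are 0 and R₀, so its spectral radius equals R₀ whenever R₀ ≥ 0. -/

import Mathlib

open Real Filter Polynomial Matrix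

lemma det_helper4 {R : Type*} [CommRing R] (a b e f g : R) :
    (!![a, b, 0, 0; 0, e, 0, 0; 0, 0, f, 0; 0, 0, 0, g]).det = a*e*f*g := by
  rw [Matrix.det_succ_row_zero]
  simp [Fin.sum_univ_succ, Matrix.det_fin_three, Matrix.vecHead, Matrix.vecTail]
  ring

set_option maxHeartbeats 2000000 in
theorem stmt6
    (lam lam' mu mu' beta alpha theta gamma phi kappa tau : ℝ)
    (delta u1 u2 u3 u4 u5 : ℝ)
    (hlam : 0 < lam) (hlam' : 0 < lam') (hmu : 0 < mu) (hmu' : 0 < mu')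
    (hbeta : 0 < beta) (halpha : 0 < alpha) (htheta : 0 < theta)
    (hgamma : 0 < gamma) (hphi : 0 < phi) (hkappa : 0 < kappa) (htau : 0 < tau)
    (hdelta : delta ∈ Set.Icc (0:ℝ) 1) (hu1 : u1 ∈ Set.Icc (0:ℝ) 1)
    (hu2 : u2 ∈ Set.Icc (0:ℝ) 1) (hu3 : u3 ∈ Set.Icc (0:ℝ) 1)
    (hu4 : u4 ∈ Set.Icc (0:ℝ) 1) (hu5 : u5 ∈ Set.Icc (0:ℝ) 1)
    (k1 k2 k3 k4 k5 k6 : ℝ)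
    (hk1 : k1 = theta + u3 + mu) (hk2 : k2 = gamma + u4 + u5 + mu + mu')
    (hk3 : k3 = kappa + tau + mu) (hk4 : k4 = phi + mu + mu') (hk5 : k5 = mu + alpha)
    (hk6 : k6 = lam / (u1 + mu) + alpha * lam' * kappa / ((u1 + mu) * k3 * k5)
      + alpha * lam' * phi * tau / ((u1 + mu) * k3 * k4 * k5))
    (R0 : ℝ) (hR0 : R0 = theta * beta * k6 * (mu * (1 - u2) + (1 - delta) * u1) / (k1 * k2 * mu))
    (Fm Vm : Matrix (Fin 4) (Fin 4) ℝ)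
    (hFm : Fm = !![0, (1 - u2) * beta * k6 + (1 - delta) * beta * u1 * k6 / mu, 0, 0;
                   0, 0, 0, 0; 0, 0, 0, 0; 0, 0, 0, 0])
    (hVm : Vm = !![k1, 0, 0, 0; -theta, k2, 0, 0; -u3, -u4, k3, 0; 0, -u5, -tau, k4]) :
    IsUnit Vm ∧
    Matrix.charpoly (Fm * Vm⁻¹) = Polynomial.X ^ 3 * (Polynomial.X - Polynomial.C R0) ∧
    spectrum ℝ (Fm * Vm⁻¹) = {0, R0} ∧
    (0 ≤ R0 → spectralRadius ℝ (Fm * Vm⁻¹) = ENNReal.ofReal R0) := by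
  have hmu0 : mu ≠ 0 := hmu.ne'
  have hk1p : (0:ℝ) < k1 := by rw [hk1]; linarith [hu3.1]
  have hk2p : (0:ℝ) < k2 := by rw [hk2]; linarith [hu4.1, hu5.1]
  have hk3p : (0:ℝ) < k3 := by rw [hk3]; linarith
  have hk4p : (0:ℝ) < k4 := by rw [hk4]; linarith
  have h1 : k1 ≠ 0 := hk1p.ne'
  have h2 : k2 ≠ 0 := hk2p.ne'
  have h3 : k3 ≠ 0 := hk3p.ne'
  have h4 : k4 ≠ 0 := hk4p.ne'
  set c : ℝ := (1 - u2) * beta * k6 + (1 - delta) * beta * u1 * k6 / mu with hc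
  set W : Matrix (Fin 4) (Fin 4) ℝ :=
    !![1/k1, 0, 0, 0;
       theta/(k1*k2), 1/k2, 0, 0;
       (u3*k2 + u4*theta)/(k1*k2*k3), u4/(k2*k3), 1/k3, 0;
       (u5*theta*k3 + tau*(u3*k2 + u4*theta))/(k1*k2*k3*k4), (u5*k3 + tau*u4)/(k2*k3*k4),
         tau/(k3*k4), 1/k4] with hW
  have hVW : Vm * W = 1 := by
    subst hVm
    ext i j
    fin_cases i <;> fin_cases j <;>
      · simp [hW, Matrix.mul_apply, Fin.sum_univ_succ, Matrix.one_apply, Matrix.vecHead,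
          Matrix.vecTail]
        try field_simp
        try ring
  have hUnit : IsUnit Vm := (Matrix.isUnit_iff_isUnit_det Vm).mpr
    (Matrix.isUnit_det_of_right_inverse hVW)
  have hinv : Vm⁻¹ = W := Matrix.inv_eq_right_inv hVW
  have hM : Fm * Vm⁻¹ = !![R0, c/k2, 0, 0; 0,0,0,0; 0,0,0,0; 0,0,0,0] := by
    rw [hinv, hFm]
    ext i j
    fin_cases i <;> fin_cases j <;>
      · simp [hW, Matrix.mul_apply, Fin.sum_univ_succ, Matrix.vecHead, Matrix.vecTail]
        try (rw [hR0, hc]; field_simp; ring)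
        try (rw [hR0]; field_simp)
        try (rw [hc]; field_simp)
  have hspec : spectrum ℝ (Fm * Vm⁻¹) = {0, R0} := by
    rw [hM]
    ext x
    rw [spectrum.mem_iff]
    have halg : (algebraMap ℝ (Matrix (Fin 4) (Fin 4) ℝ) x)
        - !![R0, c/k2, 0, 0; 0,0,0,0; 0,0,0,0; 0,0,0,0]
        = !![x - R0, -(c/k2), 0, 0; 0,x,0,0; 0,0,x,0; 0,0,0,x] := by
      rw [Matrix.algebraMap_eq_diagonal]
      ext i j
      fin_cases i <;> fin_cases j <;>
        simp [Matrix.diagonal, Matrix.vecHead, Matrix.vecTail]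
    rw [halg, Matrix.isUnit_iff_isUnit_det, det_helper4]
    simp only [isUnit_iff_ne_zero, not_not, Set.mem_insert_iff, Set.mem_singleton_iff]
    constructor
    · intro h
      simp only [mul_eq_zero, sub_eq_zero] at h
      tauto
    · rintro (rfl | rfl) <;> ring
  refine ⟨hUnit, ?_, hspec, ?_⟩
  · rw [hM, Matrix.charpoly]
    have hch : charmatrix (!![R0, c/k2, 0, 0; 0,0,0,0; 0,0,0,0; 0,0,0,0] :
        Matrix (Fin 4) (Fin 4) ℝ) =
        !![X - C R0, -C (c/k2), 0, 0; 0, X, 0, 0; 0, 0, X, 0; 0, 0, 0, X] := by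
      ext i j
      fin_cases i <;> fin_cases j <;>
        simp [charmatrix_apply, Matrix.vecHead, Matrix.vecTail]
    rw [hch, det_helper4]
    ring
  · intro hpos
    rw [spectralRadius, hspec]
    rw [iSup_insert, iSup_singleton]
    simp [← enorm_eq_nnnorm, Real.enorm_eq_ofReal hpos]
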